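/- Let A be a unital complex Banach algebra and a, b ∈ A both quasinilpotent. If a, b are {a,b}-weakly commutative (there exist c₁, c₂ with a*b = c₁*a, b*a = a*c₁, a*b = b*c₂, b*a = c₂*b), then a + b is quasinilpotent. -/

import Mathlib

open Filter ENNReal in
private lemma aux_P_def {A : Type*} [NormedRing A] [NormedAlgebra ℂ A] [CompleteSpace A]
    (x : A) (hx : spectralRadius ℂ x = 0) :
    ∀ ε : NNReal, 0 < ε → ∃ C : NNReal, ∀ n : ℕ, ‖x ^ n‖₊ ≤ C * ε ^ n := by
  intro ε hε
  have htd := spectrum.pow_nnnorm_pow_one_div_tendsto_nhds_spectralRadius x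
  rw [hx] at htd
  have hev : ∀ᶠ n : ℕ in atTop, ((‖x ^ n‖₊ : ℝ≥0∞) ^ (1 / n : ℝ)) < (ε : ℝ≥0∞) := by
    exact htd.eventually_lt_const (by exact_mod_cast hε)
  obtain ⟨N, hN⟩ := eventually_atTop.mp hev
  set N' := max N 1 with hN'
  have hbig : ∀ n, N' ≤ n → ‖x ^ n‖₊ ≤ ε ^ n := by
    intro n hn
    have hn1 : 1 ≤ n := le_trans (le_max_right N 1) hn
    have hnn : (n : ℝ) ≠ 0 := by positivity
    have h1 := hN n (le_trans (le_max_left N 1) hn)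
    have h2 : (((‖x ^ n‖₊ : ℝ≥0∞) ^ (1 / n : ℝ)) ^ (n : ℝ)) ≤ ((ε : ℝ≥0∞) ^ (n : ℝ)) :=
      ENNReal.rpow_le_rpow h1.le (by positivity)
    rw [← ENNReal.rpow_mul, one_div_mul_cancel hnn, ENNReal.rpow_one,
      ENNReal.rpow_natCast] at h2
    exact_mod_cast h2
  refine ⟨1 ⊔ (Finset.range N').sup (fun k => ‖x ^ k‖₊ / ε ^ k), fun n => ?_⟩
  by_cases h : n < N'
  · have hle : ‖x ^ n‖₊ / ε ^ n ≤ 1 ⊔ (Finset.range N').sup (fun k => ‖x ^ k‖₊ / ε ^ k) :=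
      le_sup_of_le_right (Finset.le_sup (f := fun k => ‖x ^ k‖₊ / ε ^ k) (Finset.mem_range.mpr h))
    have hεn : (ε : NNReal) ^ n ≠ 0 := by positivity
    calc ‖x ^ n‖₊ = ‖x ^ n‖₊ / ε ^ n * ε ^ n := (div_mul_cancel₀ _ hεn).symm
      _ ≤ _ := mul_le_mul_left hle _
  · calc ‖x ^ n‖₊ ≤ ε ^ n := hbig n (le_of_not_gt h)
      _ = 1 * ε ^ n := (one_mul _).symm
      _ ≤ _ := mul_le_mul_left le_sup_left _

open Filter ENNReal in
private lemma aux_P_to_rad {A : Type*} [NormedRing A] [NormedAlgebra ℂ A] [CompleteSpace A]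
    (x : A) (hx : ∀ ε : NNReal, 0 < ε → ∃ C : NNReal, ∀ n : ℕ, ‖x ^ n‖₊ ≤ C * ε ^ n) :
    spectralRadius ℂ x = 0 := by
  have key : ∀ ε : NNReal, 0 < ε → spectralRadius ℂ x ≤ (ε : ℝ≥0∞) := by
    intro ε hε
    obtain ⟨C, hC⟩ := hx ε hε
    set K : NNReal := C * ‖(1 : A)‖₊ with hK
    have hpow : ∀ n : ℕ, spectralRadius ℂ x ^ (n + 1) ≤ ((K * ε ^ (n + 1) : NNReal) : ℝ≥0∞) := by
      intro n
      have h0 := spectrum.spectralRadius_le_pow_nnnorm_pow_one_div ℂ x n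
      have hnn : ((n : ℝ) + 1) ≠ 0 := by positivity
      have h1 : spectralRadius ℂ x ^ (n + 1) ≤
          ((‖x ^ (n + 1)‖₊ : ℝ≥0∞) ^ (1 / (n + 1) : ℝ) *
            (‖(1 : A)‖₊ : ℝ≥0∞) ^ (1 / (n + 1) : ℝ)) ^ (n + 1) :=
        pow_le_pow_left' h0 (n + 1)
      rw [mul_pow] at h1
      rw [← ENNReal.rpow_natCast ((‖x ^ (n + 1)‖₊ : ℝ≥0∞) ^ (1 / (n + 1) : ℝ)) (n + 1)] at h1
      rw [← ENNReal.rpow_natCast ((‖(1 : A)‖₊ : ℝ≥0∞) ^ (1 / (n + 1) : ℝ)) (n + 1)] at h1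
      rw [← ENNReal.rpow_mul, ← ENNReal.rpow_mul] at h1
      push_cast at h1
      rw [one_div_mul_cancel hnn, ENNReal.rpow_one, ENNReal.rpow_one] at h1
      refine h1.trans ?_
      have := hC (n + 1)
      calc (‖x ^ (n + 1)‖₊ : ℝ≥0∞) * (‖(1 : A)‖₊ : ℝ≥0∞)
          ≤ ((C * ε ^ (n + 1) : NNReal) : ℝ≥0∞) * (‖(1 : A)‖₊ : ℝ≥0∞) := by
            exact mul_le_mul_left (by exact_mod_cast this) _
        _ = ((K * ε ^ (n + 1) : NNReal) : ℝ≥0∞) := by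
            rw [hK]; push_cast; ring
    have hfin : spectralRadius ℂ x ≠ ⊤ := by
      have := hpow 0
      simp only [pow_one, zero_add] at this
      exact ne_top_of_le_ne_top ENNReal.coe_ne_top this
    set s : NNReal := (spectralRadius ℂ x).toNNReal with hs
    have hrs : spectralRadius ℂ x = (s : ℝ≥0∞) := (ENNReal.coe_toNNReal hfin).symm
    have hpow' : ∀ n : ℕ, s ^ (n + 1) ≤ K * ε ^ (n + 1) := by
      intro n
      have := hpow n
      rw [hrs] at this
      exact_mod_cast this
    rw [hrs]
    rw [ENNReal.coe_le_coe]
    by_contra hlt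
    push_neg at hlt
    have h1 : (1 : NNReal) < s / ε := (one_lt_div hε).mpr hlt
    obtain ⟨m, hm⟩ := pow_unbounded_of_one_lt K h1
    have hm' : K < (s / ε) ^ (m + 1) :=
      lt_of_lt_of_le hm (pow_le_pow_right₀ h1.le (Nat.le_succ m))
    have hεn : (ε : NNReal) ^ (m + 1) ≠ 0 := by positivity
    have : (s / ε) ^ (m + 1) ≤ K := by
      rw [div_pow, div_le_iff₀ ((zero_lt_iff.mpr hεn))]
      exact hpow' m
    exact absurd this (not_le.mpr hm')
  refine le_antisymm ?_ zero_le
  refine ENNReal.le_of_forall_pos_le_add fun ε hε _ => ?_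
  rw [zero_add]
  exact key ε hε

/-- product of commuting elements, left factor has the property -/
private lemma aux_mul {A : Type*} [NormedRing A] (x y : A) (hc : x * y = y * x)
    (hx : ∀ ε : NNReal, 0 < ε → ∃ C : NNReal, ∀ n : ℕ, ‖x ^ n‖₊ ≤ C * ε ^ n) :
    ∀ ε : NNReal, 0 < ε → ∃ C : NNReal, ∀ n : ℕ, ‖(x * y) ^ n‖₊ ≤ C * ε ^ n := by
  intro ε hε
  set δ : NNReal := ε / (‖y‖₊ + 1) with hδ
  have hδpos : 0 < δ := by positivity
  obtain ⟨C, hC⟩ := hx δ hδpos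
  refine ⟨C ⊔ ‖(1 : A)‖₊, fun n => ?_⟩
  have hcomm : Commute x y := hc
  rw [hcomm.mul_pow]
  match n with
  | 0 =>
    simpa using le_sup_of_le_right (le_refl ‖(1 : A)‖₊)
  | (m + 1) =>
    calc ‖x ^ (m + 1) * y ^ (m + 1)‖₊ ≤ ‖x ^ (m + 1)‖₊ * ‖y ^ (m + 1)‖₊ := nnnorm_mul_le _ _
      _ ≤ (C * δ ^ (m + 1)) * (‖y‖₊ + 1) ^ (m + 1) := by
          refine mul_le_mul' (hC (m + 1)) ?_
          exact le_trans (nnnorm_pow_le' y (Nat.succ_pos m))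
            (pow_le_pow_left' (le_add_of_le_of_nonneg le_rfl zero_le) _)
      _ = C * (δ * (‖y‖₊ + 1)) ^ (m + 1) := by rw [mul_pow]; ring
      _ = C * ε ^ (m + 1) := by
          rw [hδ, div_mul_cancel₀]
          positivity
      _ ≤ (C ⊔ ‖(1 : A)‖₊) * ε ^ (m + 1) := mul_le_mul_left le_sup_left _

/-- sum of commuting elements -/
private lemma aux_add {A : Type*} [NormedRing A] (x y : A) (hc : x * y = y * x)
    (hx : ∀ ε : NNReal, 0 < ε → ∃ C : NNReal, ∀ n : ℕ, ‖x ^ n‖₊ ≤ C * ε ^ n)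
    (hy : ∀ ε : NNReal, 0 < ε → ∃ C : NNReal, ∀ n : ℕ, ‖y ^ n‖₊ ≤ C * ε ^ n) :
    ∀ ε : NNReal, 0 < ε → ∃ C : NNReal, ∀ n : ℕ, ‖(x + y) ^ n‖₊ ≤ C * ε ^ n := by
  intro ε hε
  set δ : NNReal := ε / 2 with hδ
  have hδpos : 0 < δ := by positivity
  obtain ⟨C₁, hC₁⟩ := hx δ hδpos
  obtain ⟨C₂, hC₂⟩ := hy δ hδpos
  refine ⟨C₁ * C₂, fun n => ?_⟩
  have hcomm : Commute x y := hc
  rw [hcomm.add_pow]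
  calc ‖∑ k ∈ Finset.range (n + 1), x ^ k * y ^ (n - k) * (n.choose k : A)‖₊
      ≤ ∑ k ∈ Finset.range (n + 1), ‖x ^ k * y ^ (n - k) * (n.choose k : A)‖₊ :=
        nnnorm_sum_le _ _
    _ ≤ ∑ k ∈ Finset.range (n + 1), (n.choose k) * (C₁ * C₂ * δ ^ n) := by
        refine Finset.sum_le_sum fun k hk => ?_
        have hk' : k ≤ n := Nat.lt_succ_iff.mp (Finset.mem_range.mp hk)
        have e1 : x ^ k * y ^ (n - k) * (n.choose k : A)
            = (n.choose k) • (x ^ k * y ^ (n - k)) := by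
          rw [nsmul_eq_mul, (Nat.commute_cast (x ^ k * y ^ (n - k)) (n.choose k)).eq]
        rw [e1]
        calc ‖(n.choose k) • (x ^ k * y ^ (n - k))‖₊
            ≤ (n.choose k) * ‖x ^ k * y ^ (n - k)‖₊ := by
              exact_mod_cast nnnorm_nsmul_le (n := n.choose k) (a := x ^ k * y ^ (n - k))
          _ ≤ (n.choose k) * ((C₁ * δ ^ k) * (C₂ * δ ^ (n - k))) := by
              refine mul_le_mul_right ?_ _
              exact le_trans (nnnorm_mul_le _ _) (mul_le_mul' (hC₁ k) (hC₂ (n - k)))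
          _ = (n.choose k) * (C₁ * C₂ * δ ^ n) := by
              rw [show C₁ * δ ^ k * (C₂ * δ ^ (n - k)) = C₁ * C₂ * (δ ^ k * δ ^ (n - k)) by ring,
                ← pow_add, Nat.add_sub_cancel' hk']
    _ = (∑ k ∈ Finset.range (n + 1), (n.choose k : NNReal)) * (C₁ * C₂ * δ ^ n) := by
        rw [Finset.sum_mul]
    _ = (2 ^ n : NNReal) * (C₁ * C₂ * δ ^ n) := by
        norm_cast
        rw [Nat.sum_range_choose]
    _ = C₁ * C₂ * (2 * δ) ^ n := by rw [mul_pow]; ring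
    _ = C₁ * C₂ * ε ^ n := by
        rw [hδ, mul_div_cancel₀]
        exact two_ne_zero

/-- from the square -/
private lemma aux_sqrt {A : Type*} [NormedRing A] (x : A)
    (hx : ∀ ε : NNReal, 0 < ε → ∃ C : NNReal, ∀ n : ℕ, ‖(x * x) ^ n‖₊ ≤ C * ε ^ n) :
    ∀ ε : NNReal, 0 < ε → ∃ C : NNReal, ∀ n : ℕ, ‖x ^ n‖₊ ≤ C * ε ^ n := by
  intro ε hε
  obtain ⟨C, hC⟩ := hx (ε * ε) (by positivity)
  have hC' : ∀ m : ℕ, ‖x ^ (2 * m)‖₊ ≤ C * ε ^ (2 * m) := by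
    intro m
    calc ‖x ^ (2 * m)‖₊ = ‖(x * x) ^ m‖₊ := by
          rw [show x * x = x ^ 2 from (sq x).symm, ← pow_mul]
      _ ≤ C * (ε * ε) ^ m := hC m
      _ = C * ε ^ (2 * m) := by
          rw [show ε * ε = ε ^ 2 from (sq ε).symm, ← pow_mul]
  refine ⟨C ⊔ C * ‖x‖₊ / ε, fun n => ?_⟩
  rcases Nat.even_or_odd n with ⟨m, hm⟩ | ⟨m, hm⟩
  · subst hm
    rw [← two_mul]
    exact le_trans (hC' m) (mul_le_mul_left le_sup_left _)
  · subst hm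
    calc ‖x ^ (2 * m + 1)‖₊ = ‖x ^ (2 * m) * x‖₊ := by rw [← pow_succ]
      _ ≤ ‖x ^ (2 * m)‖₊ * ‖x‖₊ := nnnorm_mul_le _ _
      _ ≤ C * ε ^ (2 * m) * ‖x‖₊ := mul_le_mul_left (hC' m) _
      _ = (C * ‖x‖₊ / ε) * ε ^ (2 * m + 1) := by
          rw [pow_succ, div_mul_eq_mul_div]
          rw [show C * ‖x‖₊ * (ε ^ (2 * m) * ε) = C * ε ^ (2 * m) * ‖x‖₊ * ε by ring]
          rw [mul_div_cancel_right₀ _ hε.ne']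
      _ ≤ (C ⊔ C * ‖x‖₊ / ε) * ε ^ (2 * m + 1) := mul_le_mul_left le_sup_right _

/-- to the square -/
private lemma aux_sq {A : Type*} [NormedRing A] (x : A)
    (hx : ∀ ε : NNReal, 0 < ε → ∃ C : NNReal, ∀ n : ℕ, ‖x ^ n‖₊ ≤ C * ε ^ n) :
    ∀ ε : NNReal, 0 < ε → ∃ C : NNReal, ∀ n : ℕ, ‖(x * x) ^ n‖₊ ≤ C * ε ^ n := by
  intro ε hε
  obtain ⟨C, hC⟩ := hx (NNReal.sqrt ε) (by positivity)
  refine ⟨C, fun n => ?_⟩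
  calc ‖(x * x) ^ n‖₊ = ‖x ^ (2 * n)‖₊ := by
        rw [show x * x = x ^ 2 from (sq x).symm, ← pow_mul]
    _ ≤ C * NNReal.sqrt ε ^ (2 * n) := hC (2 * n)
    _ = C * ε ^ n := by rw [pow_mul, NNReal.sq_sqrt]

theorem stmt_16 {A : Type*} [NormedRing A] [NormedAlgebra ℂ A] [CompleteSpace A]
    (a b : A) (ha : spectralRadius ℂ a = 0) (hb : spectralRadius ℂ b = 0)
    (h1 : ∃ c₁ : A, a * b = c₁ * a ∧ b * a = a * c₁)
    (h2 : ∃ c₂ : A, a * b = b * c₂ ∧ b * a = c₂ * b) :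
    spectralRadius ℂ (a + b) = 0 := by
  obtain ⟨c₁, hc1a, hc1b⟩ := h1
  obtain ⟨c₂, hc2a, hc2b⟩ := h2
  -- basic commutation identities
  have caab : (a * a) * b = b * (a * a) := by
    rw [mul_assoc, hc1a, ← mul_assoc, ← hc1b, mul_assoc]
  have cbba : (b * b) * a = a * (b * b) := by
    rw [mul_assoc, hc2b, ← mul_assoc, ← hc2a, mul_assoc]
  have caac1 : (a * a) * c₁ = c₁ * (a * a) := by
    rw [mul_assoc, ← hc1b, ← mul_assoc, hc1a, mul_assoc]
  have Caa_a : Commute (a * a) a := (Commute.refl a).mul_left (Commute.refl a)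
  have Caa_b : Commute (a * a) b := caab
  have Caa_c1 : Commute (a * a) c₁ := caac1
  have Cbb_a : Commute (b * b) a := cbba
  have Cbb_b : Commute (b * b) b := (Commute.refl b).mul_left (Commute.refl b)
  have Caa_bb : Commute (a * a) (b * b) := Caa_b.mul_right Caa_b
  have Caa_ab : Commute (a * a) (a * b) := Caa_a.mul_right Caa_b
  have Caa_ba : Commute (a * a) (b * a) := Caa_b.mul_right Caa_a
  have Cbb_ab : Commute (b * b) (a * b) := Cbb_a.mul_right Cbb_b
  have Cbb_ba : Commute (b * b) (b * a) := Cbb_b.mul_right Cbb_a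
  have Cab_ba : Commute (a * b) (b * a) := by
    show (a * b) * (b * a) = (b * a) * (a * b)
    have e1 : (a * b) * (b * a) = (a * a) * (b * b) := by
      rw [mul_assoc, ← mul_assoc b b a, cbba, ← mul_assoc]
    have e2 : (b * a) * (a * b) = (b * b) * (a * a) := by
      rw [mul_assoc, ← mul_assoc a a b, caab, ← mul_assoc]
    rw [e1, e2, Caa_bb.eq]
  -- the key squared identities
  have eab : (a * b) * (a * b) = (a * a) * (c₁ * b) := by
    rw [mul_assoc, ← mul_assoc b a b, hc1b, mul_assoc a c₁ b, ← mul_assoc]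
  have eba : (b * a) * (b * a) = (a * a) * (b * c₁) := by
    have : (b * a) * (b * a) = (b * c₁) * (a * a) := by
      rw [mul_assoc, ← mul_assoc a b a, hc1a, mul_assoc c₁ a a, ← mul_assoc]
    rw [this, ← (Caa_b.mul_right Caa_c1).eq]
  -- the P property
  have Pa := aux_P_def a ha
  have Pb := aux_P_def b hb
  have Paa := aux_sq a Pa
  have Pbb := aux_sq b Pb
  have Paa' : ∀ ε : NNReal, 0 < ε → ∃ C : NNReal, ∀ n : ℕ, ‖(a * a) ^ n‖₊ ≤ C * ε ^ n := Paa
  have Pab : ∀ ε : NNReal, 0 < ε → ∃ C : NNReal, ∀ n : ℕ, ‖(a * b) ^ n‖₊ ≤ C * ε ^ n := by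
    refine aux_sqrt (a * b) ?_
    have := aux_mul (a * a) (c₁ * b) (Caa_c1.mul_right Caa_b).eq Paa'
    rw [← eab] at this
    exact this
  have Pba : ∀ ε : NNReal, 0 < ε → ∃ C : NNReal, ∀ n : ℕ, ‖(b * a) ^ n‖₊ ≤ C * ε ^ n := by
    refine aux_sqrt (b * a) ?_
    have := aux_mul (a * a) (b * c₁) (Caa_b.mul_right Caa_c1).eq Paa'
    rw [← eba] at this
    exact this
  -- sum of the four commuting pieces
  have Ps1 := aux_add (a * a) (b * b) Caa_bb.eq Paa Pbb
  have Ps2 := aux_add (a * a + b * b) (a * b) (Caa_ab.add_left Cbb_ab).eq Ps1 Pab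
  have Ps3 := aux_add (a * a + b * b + a * b) (b * a)
    ((Caa_ba.add_left Cbb_ba).add_left Cab_ba).eq Ps2 Pba
  have hsq : (a + b) * (a + b) = a * a + b * b + a * b + b * a := by noncomm_ring
  refine aux_P_to_rad (a + b) (aux_sqrt (a + b) ?_)
  rw [hsq]
  exact Ps3
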